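/- arXiv:1212.6851 — 2 statements merged into one kernel-verified Lean document; each statement's English description precedes it below -/
import Mathlib

section
/- Let n ∈ ℕ and let ρ : (0,∞) → ℝ satisfy condition (C) with (s_1^ρ)'(r) > 0 for all r > 0, and let σ be the inverse function of s_1^ρ. Then ∫_{ℝ^n} f_n^ρ(x) dx = 1 with respect to the n-dimensional Lebesgue measure; that is, the measure ν_n^ρ with Lebesgue density f_n^ρ is a probability measure on ℝ^n. -/
open MeasureTheory Set Filter Metric

noncomputable section
open Classical

/-- The map `s_1^ρ : ℝ → ℝ`, `r ↦ ρ(|r|) r` (equal to `0` at `r = 0`). -/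
def s1 (ρ : ℝ → ℝ) (r : ℝ) : ℝ := ρ |r| * r

/-- The map `s_n^ρ : ℝ^n → ℝ^n`, `x ↦ ρ(|x|) x` (equal to `0` at `x = 0`). -/
def sn (n : ℕ) (ρ : ℝ → ℝ) (x : EuclideanSpace ℝ (Fin n)) : EuclideanSpace ℝ (Fin n) :=
  ρ ‖x‖ • x

/-- Condition (C): `ρ` is `C¹` and positive on `(0,∞)` and `s_1^ρ` is strictly increasing. -/
def CondC (ρ : ℝ → ℝ) : Prop :=
  ContDiffOn ℝ 1 ρ (Ioi 0) ∧ (∀ r : ℝ, 0 < r → 0 < ρ r) ∧ StrictMono (s1 ρ)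

/-- `σ`, the inverse function of `s_1^ρ`. -/
def sigma0 (ρ : ℝ → ℝ) : ℝ → ℝ := Function.invFun (s1 ρ)

/-- The limit density `f_n^ρ`. -/
def fDen (n : ℕ) (ρ : ℝ → ℝ) (x : EuclideanSpace ℝ (Fin n)) : ℝ :=
  if x ∈ sn n ρ '' {y | y ≠ 0} then
    (2 * Real.pi) ^ (-(n : ℝ) / 2) * Real.exp (-(sigma0 ρ ‖x‖) ^ 2 / 2) *
      (sigma0 ρ ‖x‖ / ‖x‖) ^ (n - 1) * deriv (sigma0 ρ) ‖x‖
  else 0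

/-- The measure `ν_n^ρ`, with Lebesgue density `f_n^ρ`. -/
def nuRho (n : ℕ) (ρ : ℝ → ℝ) : Measure (EuclideanSpace ℝ (Fin n)) :=
  volume.withDensity fun x => ENNReal.ofReal (fDen n ρ x)

/-- `A_m`, the surface area of the unit sphere in `ℝ^m`. -/
def sA (m : ℕ) : ℝ :=
  (μH[(m : ℝ) - 1] (Metric.sphere (0 : EuclideanSpace ℝ (Fin m)) 1)).toReal

/-- `V_n`, the volume of the unit ball in `ℝ^n`. -/
def uV (n : ℕ) : ℝ := (volume (Metric.ball (0 : EuclideanSpace ℝ (Fin n)) 1)).toReal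

/-- `M_n^f` -/
def Mf (n : ℕ) (f : ℝ → ℝ) : ℝ := (sA n)⁻¹ * ∫ r in Ioi (0 : ℝ), f r * r ^ (n - 1)

/-- The radial probability measure `μ_n^f` with density `f(|x|)/M_n^f`. -/
def muRad (n : ℕ) (f : ℝ → ℝ) : Measure (EuclideanSpace ℝ (Fin n)) :=
  volume.withDensity fun x => ENNReal.ofReal (f ‖x‖ / Mf n f)

/-- `v_N`: the uniform probability measure on the sphere of radius `√N` in `ℝ^N`. -/
def sphereMeas (N : ℕ) : Measure (EuclideanSpace ℝ (Fin N)) :=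
  ((μH[(N : ℝ) - 1] : Measure (EuclideanSpace ℝ (Fin N)))
      (Metric.sphere 0 (Real.sqrt N)))⁻¹ •
    (μH[(N : ℝ) - 1] : Measure (EuclideanSpace ℝ (Fin N))).restrict
      (Metric.sphere 0 (Real.sqrt N))

/-- Projection of `ℝ^N` onto the first `n` coordinates. -/
def projE (n N : ℕ) (x : EuclideanSpace ℝ (Fin N)) : EuclideanSpace ℝ (Fin n) :=
  WithLp.toLp 2 (fun i => if h : (i : ℕ) < N then x ⟨i, h⟩ else 0)

/-- `P_{n,N}^ρ = s_n^ρ ∘ P_{n,N}`. -/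
def Pmap (n N : ℕ) (ρ : ℝ → ℝ) (x : EuclideanSpace ℝ (Fin N)) : EuclideanSpace ℝ (Fin n) :=
  sn n ρ (projE n N x)

/-- Boundary measure `μ⁺[A]`. -/
def boundaryMeasure {α : Type*} [MeasurableSpace α] [PseudoEMetricSpace α]
    (μ : Measure α) (A : Set α) : ℝ :=
  Filter.liminf (fun ε : ℝ => ((μ (Metric.thickening ε A)).toReal - (μ A).toReal) / ε)
    (nhdsWithin 0 (Ioi 0))

/-- Isoperimetric profile `I[μ]`. -/
def isoProfile {α : Type*} [MeasurableSpace α] [PseudoEMetricSpace α]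
    (μ : Measure α) (a : ℝ) : ℝ :=
  sInf {b | ∃ A : Set α, MeasurableSet A ∧ (μ A).toReal = a ∧ b = boundaryMeasure μ A}

end

namespace Stmt2Aux
open Real

variable {ρ : ℝ → ℝ}

open Real

variable {ρ : ℝ → ℝ}

lemma s1_zero (ρ : ℝ → ℝ) : s1 ρ 0 = 0 := by simp [s1]

lemma s1_pos (hC : CondC ρ) {t : ℝ} (ht : 0 < t) : 0 < s1 ρ t := by
  have h := hC.2.2 ht
  rwa [s1_zero] at h

lemma sigma_s1 (hC : CondC ρ) (t : ℝ) : sigma0 ρ (s1 ρ t) = t :=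
  Function.leftInverse_invFun hC.2.2.injective t

lemma s1_eqOn : EqOn (s1 ρ) (fun r => ρ r * r) (Ioi 0) := fun r hr => by
  simp [s1, abs_of_pos (mem_Ioi.1 hr)]

lemma continuousOn_s1 (hC : CondC ρ) : ContinuousOn (s1 ρ) (Ioi 0) :=
  ((hC.1.continuousOn).mul continuousOn_id).congr s1_eqOn

lemma hasDerivAt_s1 (hC : CondC ρ) {t : ℝ} (ht : 0 < t) :
    HasDerivAt (s1 ρ) (deriv (s1 ρ) t) t := by
  have h1 : DifferentiableAt ℝ (fun r => ρ r * r) t :=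
    ((hC.1.contDiffAt (Ioi_mem_nhds ht)).differentiableAt one_ne_zero).mul differentiableAt_id
  have h2 : s1 ρ =ᶠ[nhds t] fun r => ρ r * r :=
    Filter.eventuallyEq_of_mem (Ioi_mem_nhds ht) s1_eqOn
  exact ((h2.differentiableAt_iff).2 h1).hasDerivAt

lemma image_Ioo_subset (hC : CondC ρ) {a b : ℝ} (ha : 0 < a) (hab : a ≤ b) :
    Ioo (s1 ρ a) (s1 ρ b) ⊆ s1 ρ '' Ioo a b :=
  intermediate_value_Ioo hab ((continuousOn_s1 hC).mono fun x hx => lt_of_lt_of_le ha hx.1)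

lemma continuousAt_sigma (hC : CondC ρ) {t : ℝ} (ht : 0 < t) :
    ContinuousAt (sigma0 ρ) (s1 ρ t) := by
  rw [Metric.continuousAt_iff]
  intro ε hε
  set ε' := min (t / 2) ε with hε'def
  have hε'0 : 0 < ε' := lt_min (by linarith) hε
  have hε't : ε' ≤ t / 2 := min_le_left _ _
  have ha : 0 < t - ε' := by linarith
  have h1 : s1 ρ (t - ε') < s1 ρ t := hC.2.2 (by linarith)
  have h2 : s1 ρ t < s1 ρ (t + ε') := hC.2.2 (by linarith)
  refine ⟨min (s1 ρ t - s1 ρ (t - ε')) (s1 ρ (t + ε') - s1 ρ t),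
    lt_min (by linarith) (by linarith), fun {x} hx => ?_⟩
  rw [Real.dist_eq] at hx
  have hb1 := abs_lt.1 (hx.trans_le (min_le_left _ _))
  have hb2 := abs_lt.1 (hx.trans_le (min_le_right _ _))
  have hxI : x ∈ Ioo (s1 ρ (t - ε')) (s1 ρ (t + ε')) := ⟨by linarith [hb1.1], by linarith [hb2.2]⟩
  obtain ⟨u, hu, hux⟩ := image_Ioo_subset hC ha (by linarith) hxI
  rw [← hux, sigma_s1 hC, sigma_s1 hC, Real.dist_eq]
  have : |u - t| < ε' := abs_lt.2 ⟨by linarith [hu.1], by linarith [hu.2]⟩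
  exact this.trans_le (min_le_right _ _)

lemma hasDerivAt_sigma (hC : CondC ρ) (hpos : ∀ r : ℝ, 0 < r → 0 < deriv (s1 ρ) r)
    {t : ℝ} (ht : 0 < t) :
    HasDerivAt (sigma0 ρ) ((deriv (s1 ρ) t)⁻¹) (s1 ρ t) := by
  have hfg : ∀ᶠ y in nhds (s1 ρ t), s1 ρ (sigma0 ρ y) = y := by
    have hsub := image_Ioo_subset hC (show (0:ℝ) < t / 2 by linarith) (show t / 2 ≤ t + 1 by linarith)
    have hmem : Ioo (s1 ρ (t / 2)) (s1 ρ (t + 1)) ∈ nhds (s1 ρ t) :=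
      Ioo_mem_nhds (hC.2.2 (by linarith)) (hC.2.2 (by linarith))
    filter_upwards [hmem] with y hy
    obtain ⟨u, _, rfl⟩ := hsub hy
    rw [sigma_s1 hC]
  have hf : HasDerivAt (s1 ρ) (deriv (s1 ρ) t) (sigma0 ρ (s1 ρ t)) := by
    rw [sigma_s1 hC]; exact hasDerivAt_s1 hC ht
  exact HasDerivAt.of_local_left_inverse (continuousAt_sigma hC ht) hf
    (ne_of_gt (hpos t ht)) hfg

lemma deriv_sigma (hC : CondC ρ) (hpos : ∀ r : ℝ, 0 < r → 0 < deriv (s1 ρ) r)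
    {t : ℝ} (ht : 0 < t) :
    deriv (sigma0 ρ) (s1 ρ t) = (deriv (s1 ρ) t)⁻¹ :=
  (hasDerivAt_sigma hC hpos ht).deriv

/-- The auxiliary density, written with `(deriv (s1 ρ) (sigma0 ρ r))⁻¹` in place of
`deriv (sigma0 ρ) r`, so that it is continuous on the image set. -/
noncomputable def F (n : ℕ) (ρ : ℝ → ℝ) (r : ℝ) : ℝ :=
  (2 * Real.pi) ^ (-(n : ℝ) / 2) * Real.exp (-(sigma0 ρ r) ^ 2 / 2) *
    (sigma0 ρ r / r) ^ (n - 1) * (deriv (s1 ρ) (sigma0 ρ r))⁻¹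

lemma norm_mem_iff (hC : CondC ρ) {n : ℕ} (x : EuclideanSpace ℝ (Fin n)) :
    x ∈ sn n ρ '' {y | y ≠ 0} ↔ ‖x‖ ∈ s1 ρ '' Ioi 0 := by
  constructor
  · rintro ⟨y, hy, rfl⟩
    have hy' : 0 < ‖y‖ := norm_pos_iff.2 hy
    refine ⟨‖y‖, hy', ?_⟩
    rw [sn, norm_smul, Real.norm_eq_abs, abs_of_pos (hC.2.1 _ hy'), s1, abs_of_pos hy']
  · rintro ⟨t, ht, hts⟩
    have ht0 : (0:ℝ) < t := ht
    have hx : 0 < ‖x‖ := by rw [← hts]; exact s1_pos hC ht0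
    have hxne : x ≠ 0 := norm_pos_iff.1 hx
    refine ⟨(t / ‖x‖) • x, smul_ne_zero (div_ne_zero ht0.ne' hx.ne') hxne, ?_⟩
    have hnorm : ‖(t / ‖x‖) • x‖ = t := by
      rw [norm_smul, Real.norm_eq_abs, abs_of_pos (div_pos ht0 hx), div_mul_cancel₀ _ hx.ne']
    rw [sn, hnorm, smul_smul]
    have : ρ t * (t / ‖x‖) = 1 := by
      have : ρ t * t = ‖x‖ := by
        have := hts; rw [s1, abs_of_pos ht0] at this; exact this
      field_simp [this]
      exact this
    rw [this, one_smul]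

lemma contDiffOn_s1 (hC : CondC ρ) : ContDiffOn ℝ 1 (s1 ρ) (Ioi 0) :=
  (hC.1.mul contDiffOn_id).congr fun r hr => by simp [s1, abs_of_pos (mem_Ioi.1 hr)]

lemma continuousOn_deriv_s1 (hC : CondC ρ) : ContinuousOn (deriv (s1 ρ)) (Ioi 0) :=
  (contDiffOn_s1 hC).continuousOn_deriv_of_isOpen isOpen_Ioi le_rfl

lemma continuousOn_sigma0 (hC : CondC ρ) : ContinuousOn (sigma0 ρ) (s1 ρ '' Ioi 0) := by
  rintro r ⟨t, ht, rfl⟩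
  exact (continuousAt_sigma hC ht).continuousWithinAt

lemma sigma_mapsTo (hC : CondC ρ) : MapsTo (sigma0 ρ) (s1 ρ '' Ioi 0) (Ioi 0) := by
  rintro r ⟨t, ht, rfl⟩
  rw [sigma_s1 hC]; exact ht

lemma T_pos (hC : CondC ρ) : ∀ r ∈ s1 ρ '' Ioi 0, 0 < r := by
  rintro r ⟨t, ht, rfl⟩; exact s1_pos hC ht

lemma continuousOn_F (hC : CondC ρ) (hpos : ∀ r : ℝ, 0 < r → 0 < deriv (s1 ρ) r) (n : ℕ) :
    ContinuousOn (F n ρ) (s1 ρ '' Ioi 0) := by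
  have hσ := continuousOn_sigma0 hC
  have h1 : ContinuousOn (fun r => Real.exp (-(sigma0 ρ r) ^ 2 / 2)) (s1 ρ '' Ioi 0) :=
    Real.continuous_exp.comp_continuousOn (((hσ.pow 2).neg).div_const 2)
  have h2 : ContinuousOn (fun r => (sigma0 ρ r / r) ^ (n - 1)) (s1 ρ '' Ioi 0) :=
    (hσ.div continuousOn_id fun r hr => (T_pos hC r hr).ne').pow _
  have h3 : ContinuousOn (fun r => (deriv (s1 ρ) (sigma0 ρ r))⁻¹) (s1 ρ '' Ioi 0) :=
    (((continuousOn_deriv_s1 hC).comp hσ (sigma_mapsTo hC))).inv₀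
      fun r hr => (hpos _ (sigma_mapsTo hC hr)).ne'
  exact ((continuousOn_const.mul h1).mul h2).mul h3

lemma measurableSet_T (hC : CondC ρ) : MeasurableSet (s1 ρ '' Ioi 0) :=
  MeasurableSet.image_of_continuousOn_injOn measurableSet_Ioi (continuousOn_s1 hC)
    (hC.2.2.injective.injOn)

lemma measurable_indicator_F (hC : CondC ρ) (hpos : ∀ r : ℝ, 0 < r → 0 < deriv (s1 ρ) r)
    (n : ℕ) : Measurable ((s1 ρ '' Ioi 0).indicator (F n ρ)) := by
  classical
  rw [← Set.piecewise_eq_indicator]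
  exact ContinuousOn.measurable_piecewise (continuousOn_F hC hpos n) continuousOn_const
    (measurableSet_T hC)

lemma fDen_eq (hC : CondC ρ) (hpos : ∀ r : ℝ, 0 < r → 0 < deriv (s1 ρ) r) (n : ℕ)
    (x : EuclideanSpace ℝ (Fin n)) :
    fDen n ρ x = (s1 ρ '' Ioi 0).indicator (F n ρ) ‖x‖ := by
  by_cases hx : x ∈ sn n ρ '' {y | y ≠ 0}
  · have hT : ‖x‖ ∈ s1 ρ '' Ioi 0 := (norm_mem_iff hC x).1 hx
    rw [fDen, if_pos hx, Set.indicator_of_mem hT, F]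
    obtain ⟨t, ht, hts⟩ := hT
    have : deriv (sigma0 ρ) ‖x‖ = (deriv (s1 ρ) (sigma0 ρ ‖x‖))⁻¹ := by
      rw [← hts, sigma_s1 hC, deriv_sigma hC hpos ht]
    rw [this]
  · rw [fDen, if_neg hx,
      Set.indicator_of_notMem (fun h => hx ((norm_mem_iff hC x).2 h))]

lemma F_nonneg (hC : CondC ρ) (hpos : ∀ r : ℝ, 0 < r → 0 < deriv (s1 ρ) r) (n : ℕ) :
    ∀ r ∈ s1 ρ '' Ioi 0, 0 ≤ F n ρ r := by
  rintro r ⟨t, ht, rfl⟩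
  have h1 : (0:ℝ) ≤ (2 * Real.pi) ^ (-(n : ℝ) / 2) :=
    Real.rpow_nonneg (by positivity) _
  have hσ : sigma0 ρ (s1 ρ t) = t := sigma_s1 hC t
  have hst : 0 < s1 ρ t := s1_pos hC ht
  rw [F, hσ]
  have h2 : (0:ℝ) ≤ (t / s1 ρ t) ^ (n - 1) := pow_nonneg (div_nonneg ht.le hst.le) _
  have h3 : (0:ℝ) ≤ (deriv (s1 ρ) t)⁻¹ := (inv_pos.2 (hpos t ht)).le
  exact mul_nonneg (mul_nonneg (mul_nonneg h1 (Real.exp_nonneg _)) h2) h3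



lemma lintegral_image_deriv {s : Set ℝ} {f f' : ℝ → ℝ} (hs : MeasurableSet s)
    (hf' : ∀ x ∈ s, HasDerivWithinAt f (f' x) s x) (hf : InjOn f s) (g : ℝ → ENNReal) :
    ∫⁻ x in f '' s, g x = ∫⁻ x in s, ENNReal.ofReal |f' x| * g (f x) := by
  simpa only [ContinuousLinearMap.det_toSpanSingleton] using
    lintegral_image_eq_lintegral_abs_det_fderiv_mul volume hs
      (fun x hx => (hf' x hx).hasFDerivWithinAt) hf g

lemma lintegral_polar (n : ℕ) (hn : 0 < n) (h : ℝ → ENNReal) (hm : Measurable h) :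
    ∫⁻ x : EuclideanSpace ℝ (Fin n), h ‖x‖ =
      (volume : Measure (EuclideanSpace ℝ (Fin n))).toSphere Set.univ *
        ∫⁻ r in Ioi (0:ℝ), ENNReal.ofReal (r ^ (n - 1)) * h r := by
  set E := EuclideanSpace ℝ (Fin n)
  haveI : Nontrivial E := ⟨EuclideanSpace.single ⟨0, hn⟩ (1:ℝ), 0, by
    intro hcon
    have := congrArg (fun v : E => v ⟨0, hn⟩) hcon
    simp at this⟩
  have hMP := (volume : Measure E).measurePreserving_homeomorphUnitSphereProd
  rw [show Module.finrank ℝ E = n from finrank_euclideanSpace_fin] at hMP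
  calc
    ∫⁻ x : E, h ‖x‖ = ∫⁻ x in ({(0:E)}ᶜ : Set E), h ‖x‖ := by
      rw [MeasureTheory.restrict_compl_singleton]
    _ = ∫⁻ x : ({(0:E)}ᶜ : Set E), h ‖(x : E)‖ ∂(volume.comap Subtype.val) :=
      (lintegral_subtype_comap (measurableSet_singleton (0:E)).compl _).symm
    _ = ∫⁻ p : sphere (0:E) 1 × Ioi (0:ℝ), h p.2
          ∂(((volume : Measure E).toSphere).prod (Measure.volumeIoiPow (n - 1))) := by
      rw [← hMP.lintegral_comp_emb (Homeomorph.measurableEmbedding _) (fun p => h (p.2 : ℝ))]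
      refine lintegral_congr fun x => ?_
      congr 1
      simp
    _ = (volume : Measure E).toSphere Set.univ *
          ∫⁻ y : Ioi (0:ℝ), h y ∂(Measure.volumeIoiPow (n - 1)) := by
      have h1 := lintegral_map (μ := ((volume : Measure E).toSphere).prod
          (Measure.volumeIoiPow (n - 1))) (f := fun y : Ioi (0:ℝ) => h y)
          (hm.comp measurable_subtype_coe) measurable_snd
      rw [Measure.map_snd_prod, lintegral_smul_measure] at h1
      exact h1.symm
    _ = (volume : Measure E).toSphere Set.univ *
          ∫⁻ r in Ioi (0:ℝ), ENNReal.ofReal (r ^ (n - 1)) * h r := by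
      congr 1
      have h1 := lintegral_withDensity_eq_lintegral_mul
        (Measure.comap Subtype.val (volume : Measure ℝ))
        (f := fun r : Ioi (0:ℝ) => ENNReal.ofReal ((r:ℝ) ^ (n-1)))
        (by measurability) (g := fun r : Ioi (0:ℝ) => h r) (hm.comp measurable_subtype_coe)
      have h2 := lintegral_subtype_comap (μ := (volume : Measure ℝ)) (s := Ioi (0:ℝ)) measurableSet_Ioi
        (fun r : ℝ => ENNReal.ofReal (r ^ (n-1)) * h r)
      exact h1.trans h2


end Stmt2Aux

open MeasureTheory Set Filter in
theorem statement2 (n : ℕ) (hn : 0 < n) (ρ : ℝ → ℝ) (hC : CondC ρ)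
    (hpos : ∀ r : ℝ, 0 < r → 0 < deriv (s1 ρ) r) :
    (∫ x : EuclideanSpace ℝ (Fin n), fDen n ρ x) = 1 ∧
      IsProbabilityMeasure (nuRho n ρ) := by
  classical
  set E := EuclideanSpace ℝ (Fin n) with hE
  set T : Set ℝ := s1 ρ '' Ioi 0 with hTdef
  have hTsub : T ⊆ Ioi (0:ℝ) := by
    rintro r ⟨t, ht, rfl⟩; exact Stmt2Aux.s1_pos hC ht
  set c : ℝ := (2 * Real.pi) ^ (-(n : ℝ) / 2) with hc
  have hc0 : 0 < c := Real.rpow_pos_of_pos (by positivity) _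
  set G : ℝ → ℝ := fun t => c * Real.exp (-t ^ 2 / 2) * t ^ (n - 1) with hG
  set A : ENNReal := ∫⁻ t in Ioi (0:ℝ), ENNReal.ofReal (G t) with hA
  set K : ENNReal := (volume : Measure E).toSphere Set.univ with hK
  have hmeasInd : Measurable fun r => ENNReal.ofReal (T.indicator (Stmt2Aux.F n ρ) r) :=
    ENNReal.measurable_ofReal.comp (Stmt2Aux.measurable_indicator_F hC hpos n)
  -- Chain 1 : the lintegral of `fDen` equals `K * A`.
  have chain1 : ∫⁻ x : E, ENNReal.ofReal (fDen n ρ x) = K * A := by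
    have h0 : ∀ x : E, ENNReal.ofReal (fDen n ρ x) =
        (fun r => ENNReal.ofReal (T.indicator (Stmt2Aux.F n ρ) r)) ‖x‖ := fun x => by
      rw [Stmt2Aux.fDen_eq hC hpos n x]
    calc ∫⁻ x : E, ENNReal.ofReal (fDen n ρ x)
        = ∫⁻ x : E, (fun r => ENNReal.ofReal (T.indicator (Stmt2Aux.F n ρ) r)) ‖x‖ :=
          lintegral_congr h0
      _ = K * ∫⁻ r in Ioi (0:ℝ), ENNReal.ofReal (r ^ (n-1)) *
            ENNReal.ofReal (T.indicator (Stmt2Aux.F n ρ) r) := Stmt2Aux.lintegral_polar n hn _ hmeasInd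
      _ = K * A := by
          congr 1
          calc ∫⁻ r in Ioi (0:ℝ), ENNReal.ofReal (r ^ (n-1)) *
                ENNReal.ofReal (T.indicator (Stmt2Aux.F n ρ) r)
              = ∫⁻ r in Ioi (0:ℝ),
                  T.indicator (fun r => ENNReal.ofReal (r ^ (n-1) * Stmt2Aux.F n ρ r)) r := by
                refine setLIntegral_congr_fun measurableSet_Ioi (fun r hr => ?_)
                by_cases hrT : r ∈ T
                · rw [Set.indicator_of_mem hrT, Set.indicator_of_mem hrT,
                    ENNReal.ofReal_mul (pow_nonneg (le_of_lt hr) _)]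
                · rw [Set.indicator_of_notMem hrT, Set.indicator_of_notMem hrT,
                    ENNReal.ofReal_zero, mul_zero]
            _ = ∫⁻ r in T, ENNReal.ofReal (r ^ (n-1) * Stmt2Aux.F n ρ r) := by
                rw [lintegral_indicator (Stmt2Aux.measurableSet_T hC),
                  Measure.restrict_restrict (Stmt2Aux.measurableSet_T hC),
                  Set.inter_eq_left.2 hTsub]
            _ = ∫⁻ t in Ioi (0:ℝ), ENNReal.ofReal |deriv (s1 ρ) t| *
                  ENNReal.ofReal ((s1 ρ t) ^ (n-1) * Stmt2Aux.F n ρ (s1 ρ t)) :=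
                Stmt2Aux.lintegral_image_deriv measurableSet_Ioi
                  (fun t ht => (Stmt2Aux.hasDerivAt_s1 hC ht).hasDerivWithinAt)
                  (hC.2.2.injective.injOn) _
            _ = A := by
                refine setLIntegral_congr_fun measurableSet_Ioi (fun t ht => ?_)
                have ht0 : (0:ℝ) < t := ht
                have hd := hpos t ht0
                have hst := Stmt2Aux.s1_pos hC ht0
                rw [abs_of_pos hd, ← ENNReal.ofReal_mul hd.le]
                congr 1
                rw [Stmt2Aux.F, Stmt2Aux.sigma_s1 hC, hG]
                have e1 : deriv (s1 ρ) t * (deriv (s1 ρ) t)⁻¹ = 1 := mul_inv_cancel₀ hd.ne'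
                have e2 : s1 ρ t ^ (n-1) * (s1 ρ t ^ (n-1))⁻¹ = 1 :=
                  mul_inv_cancel₀ (pow_ne_zero _ hst.ne')
                rw [← hc, div_pow, div_eq_mul_inv (t ^ (n-1))]
                beta_reduce
                linear_combination (s1 ρ t ^ (n-1) * (s1 ρ t ^ (n-1))⁻¹ * c * Real.exp (-t ^ 2 / 2)
                  * t ^ (n-1)) * e1 + (c * Real.exp (-t ^ 2 / 2) * t ^ (n-1)) * e2
  -- integrability of the Gaussian on `E`
  have hGint : Integrable (fun x : E => c * Real.exp (-‖x‖ ^ 2 / 2)) := by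
    have h1 := (GaussianFourier.integrable_cexp_neg_mul_sq_norm_add (V := E) (b := (1/2 : ℂ))
      (by norm_num) 0 (0 : E)).norm
    have h2 : Integrable (fun v : E => Real.exp (-‖v‖ ^ 2 / 2)) := by
      refine h1.congr (Filter.Eventually.of_forall fun v => ?_)
      have hz : (-(1/2 : ℂ) * (‖v‖ : ℂ)^2 + 0 * ((inner ℝ (0:E) v : ℝ) : ℂ))
          = ((-‖v‖^2/2 : ℝ) : ℂ) := by push_cast; ring
      simp only [hz, Complex.norm_exp, Complex.ofReal_re]
    exact h2.const_mul c
  -- value of the Gaussian integral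
  have hgauss1 : ∫ x : E, c * Real.exp (-‖x‖ ^ 2 / 2) = 1 := by
    have heq : (fun x : E => c * Real.exp (-‖x‖ ^ 2 / 2))
        = fun x : E => c * Real.exp (-(1/2 : ℝ) * ‖x‖ ^ 2) := by
      funext x; congr 1; ring_nf
    rw [heq, MeasureTheory.integral_const_mul,
      GaussianFourier.integral_rexp_neg_mul_sq_norm (by norm_num : (0:ℝ) < 1/2),
      show Module.finrank ℝ E = n from finrank_euclideanSpace_fin,
      show Real.pi / (1/2) = 2 * Real.pi by ring, hc,
      ← Real.rpow_add (by positivity)]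
    have hexp : (-(n:ℝ)/2 + (n:ℝ)/2) = 0 := by ring
    rw [hexp, Real.rpow_zero]
  have hGmeas : Measurable fun r : ℝ => ENNReal.ofReal (c * Real.exp (-r ^ 2 / 2)) := by
    fun_prop
  -- Chain 2 : `K * A = 1` via the Gaussian.
  have chain2 : K * A = 1 := by
    have hl : ∫⁻ x : E, ENNReal.ofReal (c * Real.exp (-‖x‖ ^ 2 / 2)) = 1 := by
      rw [← ofReal_integral_eq_lintegral_ofReal hGint
        (Filter.Eventually.of_forall fun x => by positivity), hgauss1, ENNReal.ofReal_one]
    have hpolar2 := Stmt2Aux.lintegral_polar n hn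
      (fun r => ENNReal.ofReal (c * Real.exp (-r ^ 2 / 2))) hGmeas
    have hr : ∫⁻ r in Ioi (0:ℝ), ENNReal.ofReal (r ^ (n-1)) *
        ENNReal.ofReal (c * Real.exp (-r ^ 2 / 2)) = A := by
      refine setLIntegral_congr_fun measurableSet_Ioi (fun r hr => ?_)
      rw [← ENNReal.ofReal_mul (pow_nonneg (le_of_lt hr) _)]
      congr 1
      rw [hG]
      ring
    rw [hpolar2, hr] at hl
    exact hl
  have hmass : ∫⁻ x : E, ENNReal.ofReal (fDen n ρ x) = 1 := by rw [chain1, chain2]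
  have hfun : fDen n ρ = fun x : E => T.indicator (Stmt2Aux.F n ρ) ‖x‖ :=
    funext (Stmt2Aux.fDen_eq hC hpos n)
  have hfmeas : Measurable (fDen n ρ) := by
    rw [hfun]; exact (Stmt2Aux.measurable_indicator_F hC hpos n).comp measurable_norm
  have hfnonneg : ∀ x : E, 0 ≤ fDen n ρ x := fun x => by
    rw [hfun]; exact Set.indicator_nonneg (Stmt2Aux.F_nonneg hC hpos n) _
  constructor
  · rw [integral_eq_lintegral_of_nonneg_ae (Filter.Eventually.of_forall hfnonneg)
      hfmeas.aestronglyMeasurable, hmass]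
    simp
  · constructor
    rw [nuRho, withDensity_apply _ MeasurableSet.univ, Measure.restrict_univ, hmass]
end

section
/- Let ρ : (0,∞) → ℝ satisfy condition (C), let n ∈ ℕ and L > 0. Then s_1^ρ : ℝ → ℝ is Lipschitz continuous with smallest Lipschitz constant L if and only if s_n^ρ : ℝ^n → ℝ^n is Lipschitz continuous with smallest Lipschitz constant L. -/
open MeasureTheory Set Filter Metric

open MeasureTheory Set Filter in
private lemma lip_sn_of_lip_s1 (ρ : ℝ → ℝ) (hpos : ∀ r : ℝ, 0 < r → 0 < ρ r)
    (hmono : Monotone (s1 ρ)) (n : ℕ) (K : NNReal)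
    (h : LipschitzWith K (s1 ρ)) : LipschitzWith K (sn n ρ) := by
  rw [lipschitzWith_iff_dist_le_mul] at h ⊢
  have hs10 : s1 ρ 0 = 0 := by simp [s1]
  have hlin : ∀ a b : ℝ, |s1 ρ a - s1 ρ b| ≤ K * |a - b| := by
    intro a b; have := h a b; rwa [Real.dist_eq, Real.dist_eq] at this
  have hle : ∀ a : ℝ, 0 ≤ a → ρ a * a ≤ K * a ∧ 0 ≤ ρ a * a := by
    intro a ha
    rcases eq_or_lt_of_le ha with rfl | ha'
    · simp [mul_nonneg K.coe_nonneg]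
    have e1 : s1 ρ a = ρ a * a := by rw [s1, abs_of_pos ha']
    have h0 : |s1 ρ a - s1 ρ 0| ≤ K * |a - 0| := hlin a 0
    rw [hs10, e1, sub_zero, sub_zero, abs_of_pos ha'] at h0
    have hnn : 0 ≤ ρ a * a := le_of_lt (mul_pos (hpos a ha') ha')
    exact ⟨le_trans (le_abs_self _) h0, hnn⟩
  -- handle half: 0 = x case
  have hzero : ∀ y : EuclideanSpace ℝ (Fin n), dist (sn n ρ 0) (sn n ρ y) ≤ K * dist 0 y := by
    intro y
    rcases eq_or_ne y 0 with rfl | hy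
    · simp
    have hb : 0 < ‖y‖ := norm_pos_iff.mpr hy
    have hsn0 : sn n ρ 0 = 0 := by simp [sn]
    rw [hsn0, dist_eq_norm, dist_eq_norm, zero_sub, zero_sub, norm_neg, norm_neg]
    have : ‖sn n ρ y‖ = ρ ‖y‖ * ‖y‖ := by
      rw [sn, norm_smul, Real.norm_eq_abs, abs_of_pos (hpos _ hb)]
    rw [this]
    exact (hle ‖y‖ hb.le).1
  intro x y
  rcases eq_or_ne x 0 with rfl | hx
  · exact hzero y
  rcases eq_or_ne y 0 with rfl | hy
  · rw [dist_comm (sn n ρ x) (sn n ρ 0), dist_comm x 0]; exact hzero x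
  have ha : 0 < ‖x‖ := norm_pos_iff.mpr hx
  have hb : 0 < ‖y‖ := norm_pos_iff.mpr hy
  set a := ‖x‖ with hadef
  set b := ‖y‖ with hbdef
  set p := (inner ℝ x y : ℝ) with hpdef
  have hp : |p| ≤ a * b := abs_real_inner_le_norm x y
  obtain ⟨hp1, hp2⟩ := abs_le.mp hp
  -- endpoint inequalities
  obtain ⟨hga, hga0⟩ := hle a ha.le
  obtain ⟨hgb, hgb0⟩ := hle b hb.le
  have e1 : s1 ρ a = ρ a * a := by rw [s1, abs_of_pos ha]
  have e2 : s1 ρ b = ρ b * b := by rw [s1, abs_of_pos hb]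
  have h1 : (ρ a * a - ρ b * b) ^ 2 ≤ (K : ℝ) ^ 2 * (a - b) ^ 2 := by
    have hab := hlin a b
    rw [e1, e2] at hab
    have := mul_self_le_mul_self (abs_nonneg _) hab
    have h2 := sq_abs (ρ a * a - ρ b * b)
    have h3 := sq_abs (a - b)
    nlinarith [this]
  have h2 : (ρ a * a + ρ b * b) ^ 2 ≤ (K : ℝ) ^ 2 * (a + b) ^ 2 := by
    have := mul_self_le_mul_self (by linarith) (add_le_add hga hgb)
    nlinarith [this]
  have hint1 : 0 ≤ (a * b + p) * ((K : ℝ) ^ 2 * (a - b) ^ 2 - (ρ a * a - ρ b * b) ^ 2) :=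
    mul_nonneg (by linarith) (by linarith)
  have hint2 : 0 ≤ (a * b - p) * ((K : ℝ) ^ 2 * (a + b) ^ 2 - (ρ a * a + ρ b * b) ^ 2) :=
    mul_nonneg (by linarith) (by linarith)
  have H2 : (a * b) * ((ρ a * a) ^ 2 - 2 * (ρ a * ρ b) * p + (ρ b * b) ^ 2)
      ≤ (a * b) * ((K : ℝ) ^ 2 * (a ^ 2 - 2 * p + b ^ 2)) := by nlinarith [hint1, hint2]
  have H3 : (ρ a * a) ^ 2 - 2 * (ρ a * ρ b) * p + (ρ b * b) ^ 2
      ≤ (K : ℝ) ^ 2 * (a ^ 2 - 2 * p + b ^ 2) :=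
    le_of_mul_le_mul_left H2 (mul_pos ha hb)
  rw [dist_eq_norm, dist_eq_norm]
  have hsq : ‖sn n ρ x - sn n ρ y‖ ^ 2
      = (ρ a * a) ^ 2 - 2 * (ρ a * ρ b) * p + (ρ b * b) ^ 2 := by
    rw [sn, sn, ← hadef, ← hbdef, norm_sub_sq_real, real_inner_smul_left,
      real_inner_smul_right, norm_smul, norm_smul, Real.norm_eq_abs, Real.norm_eq_abs,
      abs_of_pos (hpos a ha), abs_of_pos (hpos b hb), ← hadef, ← hbdef, ← hpdef]
    ring
  have hsq2 : ‖x - y‖ ^ 2 = a ^ 2 - 2 * p + b ^ 2 := by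
    rw [norm_sub_sq_real, ← hadef, ← hbdef, ← hpdef]
  have hfin : ‖sn n ρ x - sn n ρ y‖ ^ 2 ≤ ((K : ℝ) * ‖x - y‖) ^ 2 := by
    rw [mul_pow, hsq2, hsq]; exact H3
  exact (abs_le_of_sq_le_sq' hfin (mul_nonneg K.coe_nonneg (norm_nonneg _))).2

open MeasureTheory Set Filter in
private lemma lip_s1_of_lip_sn (ρ : ℝ → ℝ) (n : ℕ) (hn : 0 < n) (K : NNReal)
    (h : LipschitzWith K (sn n ρ)) : LipschitzWith K (s1 ρ) := by
  rw [lipschitzWith_iff_dist_le_mul] at h ⊢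
  intro r t
  have key : ∀ r : ℝ, sn n ρ (EuclideanSpace.single (⟨0, hn⟩ : Fin n) r)
      = EuclideanSpace.single (⟨0, hn⟩ : Fin n) (s1 ρ r) := by
    intro r
    have hnorm : ‖EuclideanSpace.single (⟨0, hn⟩ : Fin n) r‖ = |r| := by
      simp [EuclideanSpace.norm_single]
    rw [sn, hnorm]
    ext j
    simp [EuclideanSpace.single_apply, s1, mul_comm]
  have := h (EuclideanSpace.single (⟨0, hn⟩ : Fin n) r) (EuclideanSpace.single (⟨0, hn⟩ : Fin n) t)
  rwa [key, key, EuclideanSpace.dist_single_same, EuclideanSpace.dist_single_same] at this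

open MeasureTheory Set Filter in
theorem statement8 (ρ : ℝ → ℝ) (hC : CondC ρ) (n : ℕ) (hn : 0 < n)
    (L : NNReal) (hL : 0 < L) :
    (LipschitzWith L (s1 ρ) ∧ ∀ K : NNReal, LipschitzWith K (s1 ρ) → L ≤ K) ↔
      (LipschitzWith L (sn n ρ) ∧ ∀ K : NNReal, LipschitzWith K (sn n ρ) → L ≤ K) := by
  obtain ⟨-, hpos, hmono⟩ := hC
  have hiff : ∀ K : NNReal, LipschitzWith K (s1 ρ) ↔ LipschitzWith K (sn n ρ) := fun K =>
    ⟨lip_sn_of_lip_s1 ρ hpos hmono.monotone n K, lip_s1_of_lip_sn ρ n hn K⟩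
  constructor
  · rintro ⟨h1, h2⟩
    exact ⟨(hiff L).mp h1, fun K hK => h2 K ((hiff K).mpr hK)⟩
  · rintro ⟨h1, h2⟩
    exact ⟨(hiff L).mpr h1, fun K hK => h2 K ((hiff K).mp hK)⟩
end
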